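/- arXiv:1501.03691 — 4 statements merged into one kernel-verified Lean document; each statement's English description precedes it below -/
import Mathlib

section
/- Let ι : C/ℤ × ℕ → C satisfy ι(ν+ℤ, j) ∈ ν+ℤ, ι(ν₁+ℤ,j₁)+ι(ν₂+ℤ,j₂)−ι(ν₁+ν₂+ℤ,j₁+j₂) ≥ 0, and ι(ℤ,0)=0. If f and g are generalized series (finite C̄-linear combinations of series in (x−α)^ν C̄[[x−α]][log(x−α)] with ν ∈ C) all of whose terms (x−α)^μ log(x−α)^j satisfy μ − ι(μ+ℤ,j) ≥ 0 (i.e. f and g are integral with respect to ι), then the product f·g is integral with respect to ι. -/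
open scoped Classical

/-- The quotient group `C/ℤ`, where `ℤ` is embedded as the integer multiples of `1`. -/
abbrev CModZ (C : Type*) [Field C] := C ⧸ AddSubgroup.zmultiples (1 : C)

/-- The canonical projection `C → C/ℤ`. -/
def toCModZ {C : Type*} [Field C] (μ : C) : CModZ C := QuotientAddGroup.mk μ

/-- A function `ι : C/ℤ × ℕ → C` as in Definition 1 of the paper:
it chooses a representative of each class, is superadditive (the difference in
condition 2 is a nonnegative integer), and `ι(ℤ,0) = 0`. -/
structure IotaSpec (C : Type*) [Field C] where
  ι : CModZ C × ℕ → C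
  rep : ∀ (ν : CModZ C) (j : ℕ), toCModZ (ι (ν, j)) = ν
  superadd : ∀ (ν₁ ν₂ : CModZ C) (j₁ j₂ : ℕ),
    ∃ n : ℕ, ι (ν₁, j₁) + ι (ν₂, j₂) - ι (ν₁ + ν₂, j₁ + j₂) = (n : C)
  zero : ι (0, 0) = 0

/-- A term `(x-α)^μ log(x-α)^j` is integral iff `μ - ι(μ+ℤ, j) ≥ 0`,
interpreted as a nonnegative integer. -/
def IntegralTerm {C : Type*} [Field C] (I : IotaSpec C) (μ : C) (j : ℕ) : Prop :=
  ∃ n : ℕ, μ - I.ι (toCModZ μ, j) = (n : C)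

/-- A generalized series, represented by its coefficient function
`(μ, j) ↦` (coefficient of `(x-α)^μ log(x-α)^j`), is integral iff all terms occurring
with nonzero coefficient are integral. -/
def IsIntegralSeries {C : Type*} [Field C] {M : Type*} [Zero M]
    (I : IotaSpec C) (f : C × ℕ → M) : Prop :=
  ∀ p : C × ℕ, f p ≠ 0 → IntegralTerm I p.1 p.2

/-- A coefficient function represents an element of the ring `R` of finite linear
combinations of series from `(x-α)^ν C̄[[x-α]][log(x-α)]`, `ν ∈ C`: its support is
contained in a finite union of sets `(ν + ℕ) × {0,…,d}`. -/
def IsGenSeries {C : Type*} [Field C] {M : Type*} [Zero M] (f : C × ℕ → M) : Prop :=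
  ∃ (S : Finset C) (d : ℕ), ∀ p : C × ℕ, f p ≠ 0 →
    p.2 ≤ d ∧ ∃ ν ∈ S, ∃ n : ℕ, p.1 = ν + n

/-- Multiplication of generalized series (Cauchy product of coefficient functions):
exponents add and log-powers add. -/
noncomputable def gsMul {C : Type*} [Field C] {K : Type*} [Field K]
    (f g : C × ℕ → K) : C × ℕ → K :=
  fun p => ∑ᶠ q : C × ℕ, if q.2 ≤ p.2 then f q * g (p.1 - q.1, p.2 - q.2) else 0

/-- the product of two integral generalized series is integral. -/
theorem product_of_integral_is_integral {C : Type*} [Field C] [CharZero C]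
    {K : Type*} [Field K] (I : IotaSpec C) (f g : C × ℕ → K)
    (hf : IsGenSeries f) (hg : IsGenSeries g)
    (hfI : IsIntegralSeries I f) (hgI : IsIntegralSeries I g) :
    IsIntegralSeries I (gsMul f g) := by
  intro p hp
  have hex : ∃ q : C × ℕ,
      (if q.2 ≤ p.2 then f q * g (p.1 - q.1, p.2 - q.2) else 0) ≠ 0 := by
    by_contra h
    push_neg at h
    exact hp (by simp only [gsMul, finsum_congr h, finsum_zero])
  obtain ⟨q, hq⟩ := hex
  split_ifs at hq with hle
  · have hf0 : f q ≠ 0 := fun h => hq (by simp [h])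
    have hg0 : g (p.1 - q.1, p.2 - q.2) ≠ 0 := fun h => hq (by simp [h])
    obtain ⟨n₁, hn₁⟩ := hfI q hf0
    obtain ⟨n₂, hn₂⟩ := hgI _ hg0
    obtain ⟨m, hm⟩ := I.superadd (toCModZ q.1) (toCModZ (p.1 - q.1)) q.2 (p.2 - q.2)
    refine ⟨n₁ + n₂ + m, ?_⟩
    have h1 : toCModZ p.1 = toCModZ q.1 + toCModZ (p.1 - q.1) := by
      simp [toCModZ, ← QuotientAddGroup.mk_add]
    have h2 : p.2 = q.2 + (p.2 - q.2) := by omega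
    rw [← h1, ← h2] at hm
    push_cast
    simp only [Prod.fst, Prod.snd] at hn₁ hn₂
    linear_combination hn₁ + hn₂ + hm
  · exact absurd rfl hq
end

section
/- Let L = ℓ₀ + ⋯ + ℓ_r D^r with polynomial coefficients, ℓ_r(0) ≠ 0, be an operator admitting a fundamental system b_i = x^i + O(x^r), i = 0,…,r−1, in C[[x]]. Let p₀,…,p_{r−1} ∈ C(x) be rational functions and suppose x divides the common denominator of p₀,…,p_{r−1}. Then there exists an index i and a solution b_i such that (p₀ + p₁D + ⋯ + p_{r−1}D^{r−1})·b_i, viewed as a formal Laurent series, has a pole at x = 0 (i.e. has a term x^{−e} with e > 0 and nonzero coefficient). -/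
open PowerSeries

lemma coeff_zero_iterate_derivativeFun {C : Type*} [CommRing C] (f : PowerSeries C) (j : ℕ) :
    PowerSeries.coeff 0 (PowerSeries.derivativeFun^[j] f)
      = (j.factorial : C) * PowerSeries.coeff j f := by
  induction j generalizing f with
  | zero => simp
  | succ n ih =>
    have hd : PowerSeries.coeff n (PowerSeries.derivativeFun f)
        = PowerSeries.coeff (n + 1) f * (n + 1) := PowerSeries.coeff_derivative f n
    rw [Function.iterate_succ_apply, ih, hd,
      Nat.factorial_succ]
    push_cast
    ring

/-- Let `L = ℓ₀ + ⋯ + ℓ_r D^r` with polynomial coefficients, `ℓ_r(0) ≠ 0`,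
admit a fundamental system `b_i = x^i + O(x^r)` in `C[[x]]`. Let the rational functions
`p_j = a_j / s` have common denominator `s` divisible by `x` (i.e. `x ∣ s` and some `a_j`
is not divisible by `x`). Then some `(p₀ + ⋯ + p_{r-1}D^{r-1})·b_i` has a pole at `0`:
the order of the numerator series `∑ a_j b_i^{(j)}` is strictly smaller than the order
of `s`, so a term `x^{-e}` with `e > 0` appears in the Laurent expansion. -/
theorem pole_of_denominator
    {C : Type*} [Field C] [CharZero C] (r : ℕ)
    (ℓ : Fin (r + 1) → Polynomial C)
    (hr : Polynomial.eval 0 (ℓ (Fin.last r)) ≠ 0)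
    (b : Fin r → PowerSeries C)
    (hsol : ∀ i, ∑ k : Fin (r + 1),
        ((ℓ k : PowerSeries C) * (PowerSeries.derivativeFun^[(k : ℕ)] (b i))) = 0)
    (hcoeff : ∀ i : Fin r, ∀ j < r,
        PowerSeries.coeff j (b i) = if j = (i : ℕ) then 1 else 0)
    (a : Fin r → Polynomial C) (s : Polynomial C)
    (hs : Polynomial.X ∣ s) (hs0 : s ≠ 0)
    (ha : ∃ j, ¬ Polynomial.X ∣ a j) :
    ∃ i : Fin r,
      (∑ j : Fin r,
          ((a j : PowerSeries C) * (PowerSeries.derivativeFun^[(j : ℕ)] (b i)))).order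
        < (s : PowerSeries C).order := by
  obtain ⟨j₀, hj₀⟩ := ha
  rw [Polynomial.X_dvd_iff] at hj₀
  refine ⟨j₀, ?_⟩
  have hc : PowerSeries.coeff 0
      (∑ j : Fin r,
        ((a j : PowerSeries C) * (PowerSeries.derivativeFun^[(j : ℕ)] (b j₀))))
      = (a j₀).coeff 0 * (Nat.factorial j₀ : C) := by
    rw [map_sum, Finset.sum_eq_single j₀]
    · rw [PowerSeries.coeff_zero_eq_constantCoeff, map_mul,
        ← PowerSeries.coeff_zero_eq_constantCoeff, coeff_zero_iterate_derivativeFun,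
        hcoeff j₀ j₀ j₀.isLt, if_pos rfl, Polynomial.coeff_coe]
      ring
    · intro j _ hj
      rw [PowerSeries.coeff_zero_eq_constantCoeff, map_mul,
        ← PowerSeries.coeff_zero_eq_constantCoeff, coeff_zero_iterate_derivativeFun,
        hcoeff j₀ j j.isLt, if_neg (by simpa [Fin.ext_iff] using hj)]
      ring
    · simp
  have hne : (a j₀).coeff 0 * (Nat.factorial j₀ : C) ≠ 0 :=
    mul_ne_zero hj₀ (Nat.cast_ne_zero.mpr (Nat.factorial_ne_zero _))
  have hle : (∑ j : Fin r,
      ((a j : PowerSeries C) * (PowerSeries.derivativeFun^[(j : ℕ)] (b j₀)))).order ≤ 0 := by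
    simpa using PowerSeries.order_le 0 (by rw [hc]; exact hne)
  have hs0' : PowerSeries.coeff 0 (s : PowerSeries C) = 0 := by
    obtain ⟨t, rfl⟩ := hs
    simp [Polynomial.coeff_coe]
  have hpos : 0 < (s : PowerSeries C).order := by
    rcases eq_or_ne (s : PowerSeries C).order 0 with h | h
    · exact absurd ((PowerSeries.order_eq_nat.mp (by exact_mod_cast h)).1) (by simp [hs0'])
    · exact pos_iff_ne_zero.mpr h
  exact lt_of_le_of_lt hle hpos
end

section
/- The formal power series f = 1 − (1/2)x − (1/24)x³ − ⋯ and g = x² + (1/6)x³ + ⋯ determined as the two power series solutions of the operator L = (2−x) + 2(2−2x+x²)D + 4(x−1)x D² are linearly independent over ℚ; equivalently, the solution space of L in ℚ[[x]] has dimension 2, i.e. equals the order of L, even though the leading coefficient 4(x−1)x vanishes at 0. -/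
open PowerSeries

/-- The operator `L = (2−x) + 2(2−2x+x²)D + 4(x−1)x D²` acting on `ℚ[[x]]`. -/
noncomputable def Lop5 (f : PowerSeries ℚ) : PowerSeries ℚ :=
  (2 - X) * f + (4 - 4 * X + 2 * X ^ 2) * PowerSeries.derivativeFun f
    + (4 * X ^ 2 - 4 * X) * PowerSeries.derivativeFun (PowerSeries.derivativeFun f)

private lemma coeff_derivativeFun' (f : PowerSeries ℚ) (n : ℕ) :
    coeff n (derivativeFun f) = coeff (n + 1) f * (n + 1) :=
  coeff_derivative f n

private lemma Lop5_eq (h : PowerSeries ℚ) :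
    Lop5 h = C 2 * h + C 4 * derivativeFun h - X * h
      - C 4 * (X * derivativeFun h) - C 4 * (X * derivativeFun (derivativeFun h))
      + C 2 * (X ^ 2 * derivativeFun h)
      + C 4 * (X ^ 2 * derivativeFun (derivativeFun h)) := by
  unfold Lop5
  rw [show (2 : PowerSeries ℚ) = C 2 from (map_ofNat _ 2).symm,
    show (4 : PowerSeries ℚ) = C 4 from (map_ofNat _ 4).symm]
  ring

private lemma L0 (h : PowerSeries ℚ) :
    coeff 0 (Lop5 h) = 2 * coeff 0 h + 4 * coeff 1 h := by
  have hc : ∀ p : PowerSeries ℚ, constantCoeff (derivativeFun p) = coeff 1 p := by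
    intro p
    rw [← coeff_zero_eq_constantCoeff, coeff_derivativeFun']
    simp
  rw [Lop5_eq]
  simp [coeff_derivativeFun', hc]

private lemma L1 (h : PowerSeries ℚ) :
    coeff 1 (Lop5 h) = -(coeff 0 h) - 2 * coeff 1 h := by
  rw [Lop5_eq]
  have h2 : ∀ p : PowerSeries ℚ, coeff 1 (X ^ 2 * p) = 0 := by
    intro p
    rw [pow_two, mul_assoc, coeff_succ_X_mul]
    simp
  simp [coeff_derivativeFun', coeff_succ_X_mul, h2]
  ring

private lemma L2 (h : PowerSeries ℚ) (n : ℕ) :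
    coeff (n + 2) (Lop5 h) =
      (2 * (n : ℚ) + 1) * coeff (n + 1) h
      + (4 * (n : ℚ) ^ 2 + 8 * n + 2) * coeff (n + 2) h
      - (4 * (n : ℚ) ^ 2 + 16 * n + 12) * coeff (n + 3) h := by
  rw [Lop5_eq]
  have hx : ∀ p : PowerSeries ℚ, coeff (n + 2) (X * p) = coeff (n + 1) p := by
    intro p
    exact coeff_succ_X_mul (n + 1) p
  have hx2 : ∀ p : PowerSeries ℚ, coeff (n + 2) (X ^ 2 * p) = coeff n p := by
    intro p
    exact coeff_X_pow_mul p 2 n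
  simp [coeff_derivativeFun', hx, hx2]
  ring

/-- The solution sequence with prescribed coefficients `c0` at `0` and `c2` at `2`. -/
private def seq (c0 c2 : ℚ) : ℕ → ℚ
  | 0 => c0
  | 1 => -c0 / 2
  | 2 => c2
  | (n + 3) =>
      ((4 * (n : ℚ) ^ 2 + 8 * n + 2) * seq c0 c2 (n + 2)
        + (2 * (n : ℚ) + 1) * seq c0 c2 (n + 1)) / (4 * (n : ℚ) ^ 2 + 16 * n + 12)

private lemma denom_ne (n : ℕ) : (4 * (n : ℚ) ^ 2 + 16 * n + 12) ≠ 0 := by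
  positivity

private lemma Lop5_seq (c0 c2 : ℚ) : Lop5 (mk (seq c0 c2)) = 0 := by
  ext n
  match n with
  | 0 =>
    rw [L0]
    simp [seq]
    ring
  | 1 =>
    rw [L1]
    simp [seq]
    ring
  | (n + 2) =>
    rw [L2]
    simp only [coeff_mk, map_zero]
    show (2 * (n : ℚ) + 1) * seq c0 c2 (n + 1)
      + (4 * (n : ℚ) ^ 2 + 8 * n + 2) * seq c0 c2 (n + 2)
      - (4 * (n : ℚ) ^ 2 + 16 * n + 12) * seq c0 c2 (n + 3) = 0
    rw [show seq c0 c2 (n + 3) = ((4 * (n : ℚ) ^ 2 + 8 * n + 2) * seq c0 c2 (n + 2)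
        + (2 * (n : ℚ) + 1) * seq c0 c2 (n + 1)) / (4 * (n : ℚ) ^ 2 + 16 * n + 12) from rfl]
    field_simp
    ring

private lemma Lop5_unique (h : PowerSeries ℚ) (hh : Lop5 h = 0)
    (e0 : coeff 0 h = 0) (e2 : coeff 2 h = 0) : h = 0 := by
  have e1 : coeff 1 h = 0 := by
    have := L0 h
    rw [hh, map_zero, e0] at this
    linarith
  have key : ∀ n, coeff n h = 0 := by
    intro n
    induction n using Nat.strong_induction_on with
    | _ n ih =>
      match n with
      | 0 => exact e0
      | 1 => exact e1
      | 2 => exact e2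
      | (n + 3) =>
        have i1 : coeff (n + 1) h = 0 := ih (n + 1) (by omega)
        have i2 : coeff (n + 2) h = 0 := ih (n + 2) (by omega)
        have := L2 h n
        rw [hh, map_zero, i1, i2] at this
        have hd := denom_ne n
        have : (4 * (n : ℚ) ^ 2 + 16 * n + 12) * coeff (n + 3) h = 0 := by linarith
        exact (mul_eq_zero.mp this).resolve_left hd
  ext n
  simp [key n]

private lemma Lop5_sub (a b : PowerSeries ℚ) : Lop5 (a - b) = Lop5 a - Lop5 b := by
  have hd : ∀ p q : PowerSeries ℚ, derivativeFun (p - q) = derivativeFun p - derivativeFun q := by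
    intro p q
    ext n
    simp [coeff_derivativeFun', sub_mul]
  unfold Lop5
  simp only [hd]
  ring

private lemma Lop5_smul (c : ℚ) (a : PowerSeries ℚ) : Lop5 (c • a) = c • Lop5 a := by
  simp only [Lop5, derivativeFun_smul, mul_smul_comm, ← smul_add]

/-- the two power series solutions `f = 1 − x/2 − ⋯` and `g = x² + x³/6 + ⋯`
of `L = (2−x) + 2(2−2x+x²)D + 4(x−1)xD²` are linearly independent over `ℚ`; the solution
space of `L` in `ℚ[[x]]` is 2-dimensional, i.e. of dimension equal to the order of `L`,
even though the leading coefficient `4(x−1)x` vanishes at `0`. -/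
theorem solution_space_dimension_two :
    ∃ f g : PowerSeries ℚ,
      Lop5 f = 0 ∧ Lop5 g = 0 ∧
      PowerSeries.coeff 0 f = 1 ∧ PowerSeries.coeff 1 f = -(1/2) ∧
      PowerSeries.coeff 0 g = 0 ∧ PowerSeries.coeff 1 g = 0 ∧
      PowerSeries.coeff 2 g = 1 ∧
      LinearIndependent ℚ ![f, g] ∧
      ∀ h : PowerSeries ℚ, Lop5 h = 0 →
        h ∈ Submodule.span ℚ ({f, g} : Set (PowerSeries ℚ)) := by
  refine ⟨mk (seq 1 0), mk (seq 0 1), Lop5_seq 1 0, Lop5_seq 0 1, ?_, ?_, ?_, ?_, ?_, ?_, ?_⟩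
  · simp [seq]
  · rw [coeff_mk]; norm_num [seq]
  · simp [seq]
  · rw [coeff_mk]; norm_num [seq]
  · simp [seq]
  · rw [LinearIndependent.pair_iff]
    intro s t hst
    have c0 := congrArg (coeff 0) hst
    have c2 := congrArg (coeff 2) hst
    simp [seq] at c0 c2
    exact ⟨c0, c2⟩
  · intro h hh
    rw [Submodule.mem_span_pair]
    refine ⟨coeff 0 h, coeff 2 h, ?_⟩
    have hz : h - (coeff 0 h • mk (seq 1 0) + coeff 2 h • mk (seq 0 1)) = 0 := by
      apply Lop5_unique
      · rw [Lop5_sub, hh]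
        have : Lop5 (coeff 0 h • mk (seq 1 0) + coeff 2 h • mk (seq 0 1))
            = 0 := by
          have := Lop5_sub (coeff 0 h • mk (seq 1 0))
            (-(coeff 2 h • mk (seq 0 1)))
          rw [sub_neg_eq_add] at this
          rw [this, Lop5_smul, Lop5_seq, smul_zero]
          have hn : Lop5 (-(coeff 2 h • mk (seq 0 1))) = 0 := by
            rw [show -(coeff 2 h • mk (seq 0 1)) = (-(coeff 2 h)) • mk (seq 0 1) by
              rw [neg_smul], Lop5_smul, Lop5_seq, smul_zero]
          rw [hn, sub_zero]
        rw [this, sub_zero]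
      · simp [seq]
      · simp [seq]
    exact (sub_eq_zero.mp hz).symm
end

section
/- If a generalized series h ∈ ⋃_{ν∈C}(x−α)^ν C̄[[x−α]][log(x−α)] is hyperexponential (i.e. satisfies a first-order linear ODE a h′ + b h = 0 with polynomial a ≠ 0, b) and nonzero, then h contains no logarithmic terms: h ∈ (x−α)^ν C̄[[x−α]] for some ν, with nonzero lowest coefficient; in particular h is invertible in the ring of such series. -/
open scoped Classical

/-- The multiplicative unit of the ring of generalized series. -/
noncomputable def gsOne {C : Type*} [Field C] {K : Type*} [Field K] : C × ℕ → K :=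
  fun p => if p = (0, 0) then 1 else 0

/-- Formal differentiation `D = d/dx` of generalized series:
`D((x-α)^μ log(x-α)^j) = μ (x-α)^{μ-1} log^j + j (x-α)^{μ-1} log^{j-1}`.
The exponents live in `C`, the coefficients in the extension field `K` of `C`. -/
noncomputable def gsDeriv {C : Type*} [Field C] {K : Type*} [Field K] [Algebra C K]
    (f : C × ℕ → K) : C × ℕ → K :=
  fun p => algebraMap C K (p.1 + 1) * f (p.1 + 1, p.2)
    + ((p.2 : K) + 1) * f (p.1 + 1, p.2 + 1)

/-- Multiplication of a generalized series by a polynomial in `x - α`. -/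
noncomputable def polyAct {C : Type*} [Field C] {K : Type*} [Field K]
    (q : Polynomial K) (f : C × ℕ → K) : C × ℕ → K :=
  fun p => ∑ k ∈ Finset.range (q.natDegree + 1), q.coeff k * f (p.1 - (k : C), p.2)

/-- The determinant of a matrix of generalized series, via the Leibniz formula. -/
noncomputable def gsDet {C : Type*} [Field C] {K : Type*} [Field K] {r : ℕ}
    (M : Fin r → Fin r → (C × ℕ → K)) : C × ℕ → K :=
  fun p => ∑ σ : Equiv.Perm (Fin r),
    (Equiv.Perm.sign σ : ℤ) •
      (List.foldr gsMul gsOne (List.ofFn fun i => M i (σ i))) p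
section Aux

set_option linter.unusedSectionVars false

variable {C : Type*} [Field C] [CharZero C] {K : Type*} [Field K] [Algebra C K]

private lemma ode_eval (h : C × ℕ → K) (a b : Polynomial K)
    (hode : (fun p : C × ℕ => polyAct a (gsDeriv h) p + polyAct b h p) = 0)
    (x : C) (j : ℕ) :
    (∑ k ∈ Finset.range (a.natDegree + 1),
        a.coeff k * (algebraMap C K (x - k + 1) * h (x - k + 1, j)
          + ((j : K) + 1) * h (x - k + 1, j + 1)))
      + ∑ k ∈ Finset.range (b.natDegree + 1), b.coeff k * h (x - k, j) = 0 := by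
  have := congrFun hode (x, j)
  simpa [polyAct, gsDeriv] using this

private lemma coeff_b_low (h : C × ℕ → K) (a b : Polynomial K)
    (hode : (fun p : C × ℕ => polyAct a (gsDeriv h) p + polyAct b h p) = 0)
    (μ : C) (j0 : ℕ) (hj0 : h (μ, j0) ≠ 0)
    (hmin : ∀ z : ℤ, z < 0 → ∀ j, h (μ + (z : C), j) = 0) :
    ∀ k : ℕ, k + 1 < a.natTrailingDegree → b.coeff k = 0 := by
  intro k
  induction k using Nat.strong_induction_on with
  | _ k IH =>
    intro hk
    have h0 := ode_eval h a b hode (μ + (k : C)) j0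
    have hA : (∑ k' ∈ Finset.range (a.natDegree + 1),
        a.coeff k' * (algebraMap C K (μ + (k : C) - k' + 1) * h (μ + (k : C) - k' + 1, j0)
          + ((j0 : K) + 1) * h (μ + (k : C) - k' + 1, j0 + 1))) = 0 := by
      apply Finset.sum_eq_zero
      intro k' _
      rcases lt_or_ge k' a.natTrailingDegree with hlt | hge
      · rw [Polynomial.coeff_eq_zero_of_lt_natTrailingDegree hlt, zero_mul]
      · have e1 : μ + (k : C) - k' + 1 = μ + (((k : ℤ) + 1 - k' : ℤ) : C) := by
          push_cast; ring
        have hz : ((k : ℤ) + 1 - k' : ℤ) < 0 := by omega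
        rw [e1, hmin _ hz, hmin _ hz, mul_zero, mul_zero, add_zero, mul_zero]
    have hB : (∑ k' ∈ Finset.range (b.natDegree + 1), b.coeff k' * h (μ + (k : C) - k', j0))
        = b.coeff k * h (μ, j0) := by
      have hterm : b.coeff k * h (μ + (k : C) - k, j0) = b.coeff k * h (μ, j0) := by
        norm_num
      rw [Finset.sum_eq_single k]
      · exact hterm
      · intro k' _ hk'
        rcases lt_or_gt_of_ne hk' with hlt | hgt
        · rw [IH k' hlt (by omega), zero_mul]
        · have e1 : μ + (k : C) - k' = μ + (((k : ℤ) - k' : ℤ) : C) := by push_cast; ring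
          have hz : ((k : ℤ) - k' : ℤ) < 0 := by omega
          rw [e1, hmin _ hz, mul_zero]
      · intro hknot
        rw [Polynomial.coeff_eq_zero_of_natDegree_lt (by simpa using hknot), zero_mul]
    rw [hA, hB, zero_add, mul_eq_zero] at h0
    exact h0.resolve_right hj0

private lemma key_eval (h : C × ℕ → K) (a b : Polynomial K)
    (hode : (fun p : C × ℕ => polyAct a (gsDeriv h) p + polyAct b h p) = 0)
    (ha : a ≠ 0) (μ : C)
    (hmin : ∀ z : ℤ, z < 0 → ∀ j, h (μ + (z : C), j) = 0)
    (hblow : ∀ k : ℕ, k + 1 < a.natTrailingDegree → b.coeff k = 0)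
    (m j : ℕ) (hmj : 1 ≤ j ∨ m = 0)
    (hIH : ∀ m' : ℕ, m' < m → ∀ j', 1 ≤ j' → h (μ + (m' : C), j') = 0) :
    a.coeff a.natTrailingDegree *
        (algebraMap C K (μ + (m : C)) * h (μ + (m : C), j)
          + ((j : K) + 1) * h (μ + (m : C), j + 1))
      + (if a.natTrailingDegree = 0 then 0 else b.coeff (a.natTrailingDegree - 1))
          * h (μ + (m : C), j) = 0 := by
  set s := a.natTrailingDegree with hs
  -- general vanishing lemma
  have hlow : ∀ z : ℤ, z < m → ∀ j', (1 ≤ j' ∨ z < 0) → h (μ + (z : C), j') = 0 := by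
    intro z hz j' hj'
    rcases lt_or_ge z 0 with hneg | hpos
    · exact hmin z hneg j'
    · rcases hj' with hj' | hneg
      · lift z to ℕ using hpos
        exact_mod_cast hIH z (by exact_mod_cast hz) j' hj'
      · omega
  have h0 := ode_eval h a b hode (μ + (m : C) + (s : C) - 1) j
  have hA : (∑ k ∈ Finset.range (a.natDegree + 1),
        a.coeff k * (algebraMap C K (μ + (m : C) + (s : C) - 1 - k + 1)
            * h (μ + (m : C) + (s : C) - 1 - k + 1, j)
          + ((j : K) + 1) * h (μ + (m : C) + (s : C) - 1 - k + 1, j + 1)))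
      = a.coeff s * (algebraMap C K (μ + (m : C)) * h (μ + (m : C), j)
          + ((j : K) + 1) * h (μ + (m : C), j + 1)) := by
    have hsmem : s ∈ Finset.range (a.natDegree + 1) := by
      simp only [Finset.mem_range, Nat.lt_succ_iff, hs]
      exact a.natTrailingDegree_le_natDegree
    rw [Finset.sum_eq_single_of_mem s hsmem]
    · have e0 : μ + (m : C) + (s : C) - 1 - (s : C) + 1 = μ + (m : C) := by ring
      rw [e0]
    · intro k _ hks
      rcases lt_or_gt_of_ne hks with hlt | hgt
      · rw [Polynomial.coeff_eq_zero_of_lt_natTrailingDegree hlt, zero_mul]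
      · have e1 : μ + (m : C) + (s : C) - 1 - k + 1 = μ + (((m : ℤ) + s - k : ℤ) : C) := by
          push_cast; ring
        have hz : ((m : ℤ) + s - k : ℤ) < m := by omega
        have hjc : (1 ≤ j ∨ ((m : ℤ) + s - k : ℤ) < 0) := by
          rcases hmj with hj1 | hm0
          · exact Or.inl hj1
          · exact Or.inr (by omega)
        rw [e1, hlow _ hz j hjc, hlow _ hz (j + 1) (Or.inl (by omega)),
          mul_zero, mul_zero, add_zero, mul_zero]
  have hB : (∑ k ∈ Finset.range (b.natDegree + 1), b.coeff k * h (μ + (m : C) + (s : C) - 1 - k, j))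
      = (if s = 0 then 0 else b.coeff (s - 1)) * h (μ + (m : C), j) := by
    rcases Nat.eq_zero_or_pos s with hs0 | hspos
    · rw [hs0, if_pos rfl, zero_mul]
      apply Finset.sum_eq_zero
      intro k _
      have e1 : μ + (m : C) + ((0:ℕ) : C) - 1 - k = μ + (((m : ℤ) - 1 - k : ℤ) : C) := by
        push_cast; ring
      have hz : ((m : ℤ) - 1 - k : ℤ) < m := by omega
      have hjc : (1 ≤ j ∨ ((m : ℤ) - 1 - k : ℤ) < 0) := by
        rcases hmj with hj1 | hm0
        · exact Or.inl hj1
        · exact Or.inr (by omega)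
      rw [e1, hlow _ hz j hjc, mul_zero]
    · rw [if_neg (by omega)]
      have hterm : b.coeff (s - 1) * h (μ + (m : C) + (s : C) - 1 - ((s - 1 : ℕ) : C), j)
          = b.coeff (s - 1) * h (μ + (m : C), j) := by
        have : μ + (m : C) + (s : C) - 1 - ((s - 1 : ℕ) : C) = μ + (m : C) := by
          have : ((s - 1 : ℕ) : C) = (s : C) - 1 := by
            push_cast [Nat.cast_sub hspos]; ring
          rw [this]; ring
        rw [this]
      rw [Finset.sum_eq_single (s - 1)]
      · exact hterm
      · intro k _ hk
        rcases lt_or_gt_of_ne hk with hlt | hgt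
        · rw [hblow k (by omega), zero_mul]
        · have e1 : μ + (m : C) + (s : C) - 1 - k = μ + (((m : ℤ) + s - 1 - k : ℤ) : C) := by
            push_cast; ring
          have hz : ((m : ℤ) + s - 1 - k : ℤ) < m := by omega
          have hjc : (1 ≤ j ∨ ((m : ℤ) + s - 1 - k : ℤ) < 0) := by
            rcases hmj with hj1 | hm0
            · exact Or.inl hj1
            · exact Or.inr (by omega)
          rw [e1, hlow _ hz j hjc, mul_zero]
      · intro hnot
        rw [Polynomial.coeff_eq_zero_of_natDegree_lt (by simp at hnot; omega), zero_mul]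
  rw [hA, hB] at h0
  exact h0

end Aux

/-- a nonzero hyperexponential generalized series `h` (satisfying
`a h′ + b h = 0` with polynomials `a ≠ 0`, `b`) contains no logarithmic terms:
`h ∈ (x-α)^ν C̄[[x-α]]` for some `ν`, with nonzero lowest coefficient; in particular
`h` is invertible in the ring of generalized series. -/
theorem hyperexponential_no_logs
    {C : Type*} [Field C] [CharZero C] {K : Type*} [Field K] [Algebra C K]
    (h : C × ℕ → K) (hgen : IsGenSeries h) (hne : h ≠ 0)
    (a b : Polynomial K) (ha : a ≠ 0)
    (hode : (fun p : C × ℕ => polyAct a (gsDeriv h) p + polyAct b h p) = 0) :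
    ∃ ν : C,
      (∀ p : C × ℕ, h p ≠ 0 → p.2 = 0 ∧ ∃ k : ℕ, p.1 = ν + (k : C)) ∧
      h (ν, 0) ≠ 0 ∧
      ∃ g : C × ℕ → K, (∀ p : C × ℕ, g p ≠ 0 → p.2 = 0) ∧ gsMul h g = gsOne := by
  classical
  obtain ⟨S, d, hS⟩ := hgen
  have hinj : Function.Injective (algebraMap C K) := (algebraMap C K).injective
  haveI : CharZero K := charZero_of_injective_algebraMap hinj
  obtain ⟨p₀, hp₀⟩ := Function.ne_iff.mp hne
  -- existence of a minimal exponent in the ℤ-coset of any support point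
  have exist_min : ∀ p : C × ℕ, h p ≠ 0 →
      ∃ μ : C, (∃ j, h (μ, j) ≠ 0) ∧ (∀ z : ℤ, z < 0 → ∀ j, h (μ + (z : C), j) = 0) ∧
        ∃ n : ℕ, p.1 = μ + (n : C) := by
    intro p hp
    obtain ⟨-, ν₀, hν₀S, n₀, hn₀⟩ := hS p hp
    have hSne : S.Nonempty := ⟨ν₀, hν₀S⟩
    set f : C → ℤ := fun ν => if hz : ∃ z : ℤ, (ν : C) = p.1 + (z : C) then hz.choose else 0
      with hf
    set B : ℤ := S.inf' hSne f with hB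
    have hbdd : ∀ z : ℤ, (∃ j, h (p.1 + (z : C), j) ≠ 0) → B ≤ z := by
      rintro z ⟨j, hj⟩
      obtain ⟨-, ν, hνS, n, hn⟩ := hS (p.1 + (z : C), j) hj
      have hn' : p.1 + (z : C) = ν + (n : C) := hn
      have hex : ∃ w : ℤ, (ν : C) = p.1 + (w : C) := ⟨z - n, by push_cast; linear_combination -hn'⟩
      have hfν : (ν : C) = p.1 + ((f ν : ℤ) : C) := by
        rw [hf]; dsimp only
        rw [dif_pos hex]; exact hex.choose_spec
      have hfval : f ν = z - n := by
        have e : p.1 + ((f ν : ℤ) : C) = p.1 + ((z - n : ℤ) : C) := by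
          rw [← hfν]; push_cast; linear_combination -hn'
        exact Int.cast_injective (add_left_cancel e)
      have := Finset.inf'_le f hνS
      omega
    have hB0 : B ≤ 0 := hbdd 0 ⟨p.2, by simpa using hp⟩
    have hPex : ∃ n : ℕ, ∃ j, h (p.1 + (B : C) + (n : C), j) ≠ 0 := by
      refine ⟨(-B).toNat, p.2, ?_⟩
      have e : p.1 + (B : C) + (((-B).toNat : ℕ) : C) = p.1 := by
        have e' : (((-B).toNat : ℕ) : C) = ((-B : ℤ) : C) := by
          exact_mod_cast congrArg (fun z : ℤ => (z : C)) (Int.toNat_of_nonneg (by omega))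
        rw [e']; push_cast; ring
      rw [e]; simpa using hp
    set N := Nat.find hPex with hN
    refine ⟨p.1 + (B : C) + (N : C), ?_, ?_, ?_⟩
    · exact Nat.find_spec hPex
    · intro z hz j
      by_contra hcon
      have hz' : B ≤ B + N + z := by
        apply hbdd
        refine ⟨j, ?_⟩
        have e : p.1 + ((B + N + z : ℤ) : C) = p.1 + (B : C) + (N : C) + (z : C) := by
          push_cast; ring
        rw [e]; exact hcon
      have hnn : 0 ≤ (N : ℤ) + z := by omega
      have hlt : ((N : ℤ) + z).toNat < N := by omega
      apply Nat.find_min hPex hlt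
      refine ⟨j, ?_⟩
      have e : p.1 + (B : C) + ((((N : ℤ) + z).toNat : ℕ) : C)
          = p.1 + (B : C) + (N : C) + (z : C) := by
        have e' : ((((N : ℤ) + z).toNat : ℕ) : C) = (((N : ℤ) + z : ℤ) : C) := by
          exact_mod_cast congrArg (fun w : ℤ => (w : C)) (Int.toNat_of_nonneg hnn)
        rw [e']; push_cast; ring
      rw [e]; exact hcon
    · have hNle : (N : ℤ) ≤ -B := by
        have h1 : N ≤ (-B).toNat := Nat.find_le (by
          refine ⟨p.2, ?_⟩
          have e : p.1 + (B : C) + (((-B).toNat : ℕ) : C) = p.1 := by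
            have e' : (((-B).toNat : ℕ) : C) = ((-B : ℤ) : C) := by
              exact_mod_cast congrArg (fun z : ℤ => (z : C)) (Int.toNat_of_nonneg (by omega))
            rw [e']; push_cast; ring
          rw [e]; simpa using hp)
        omega
      refine ⟨(-B - N).toNat, ?_⟩
      have e' : (((-B - N).toNat : ℕ) : C) = ((-B - N : ℤ) : C) := by
        exact_mod_cast congrArg (fun z : ℤ => (z : C)) (Int.toNat_of_nonneg (by omega))
      rw [e']; push_cast; ring
  obtain ⟨ν, ⟨j₀, hj₀⟩, hminν, -⟩ := exist_min p₀ hp₀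
  have hblow := coeff_b_low h a b hode ν j₀ hj₀ hminν
  set s := a.natTrailingDegree with hs
  have has0 : a.coeff s ≠ 0 := Polynomial.coeff_natTrailingDegree_ne_zero.mpr ha
  set c : K := if s = 0 then 0 else b.coeff (s - 1) with hc
  -- maximal log-power at a given exponent
  have maxJ : ∀ x : C, (∃ j, h (x, j) ≠ 0) → ∃ J, h (x, J) ≠ 0 ∧ ∀ j, h (x, j) ≠ 0 → j ≤ J := by
    rintro x ⟨j, hj⟩
    set Js := (Finset.range (d + 1)).filter (fun j => h (x, j) ≠ 0) with hJs
    have hmem : ∀ j', h (x, j') ≠ 0 → j' ∈ Js := by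
      intro j' hj'
      simp only [hJs, Finset.mem_filter, Finset.mem_range, Nat.lt_succ_iff]
      exact ⟨(hS (x, j') hj').1, hj'⟩
    have hJne : Js.Nonempty := ⟨j, hmem j hj⟩
    refine ⟨Js.max' hJne, (Finset.mem_filter.mp (Js.max'_mem hJne)).2, fun j' hj' =>
      Finset.le_max' Js j' (hmem j' hj')⟩
  -- the indicial relation at a coset-minimal exponent, and absence of logs there
  have indicial : ∀ μ : C, (∃ j, h (μ, j) ≠ 0) →
      (∀ z : ℤ, z < 0 → ∀ j, h (μ + (z : C), j) = 0) →
      (a.coeff s * algebraMap C K μ + c = 0) ∧ (∀ j, 1 ≤ j → h (μ, j) = 0) ∧ h (μ, 0) ≠ 0 := by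
    intro μ hex hmin
    obtain ⟨J, hJ, hJmax⟩ := maxJ μ hex
    have kill : ∀ j, a.coeff s * algebraMap C K μ * h (μ, j)
        + a.coeff s * ((j : K) + 1) * h (μ, j + 1) + c * h (μ, j) = 0 := by
      intro j
      have key := key_eval h a b hode ha μ hmin hblow 0 j (Or.inr rfl) (by omega)
      rw [← hs, ← hc] at key
      simp only [Nat.cast_zero, add_zero] at key
      linear_combination key
    have hJ1 : h (μ, J + 1) = 0 := by
      by_contra hcnt
      exact absurd (hJmax _ hcnt) (by omega)
    have hfirst : a.coeff s * algebraMap C K μ + c = 0 := by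
      have k0 := kill J
      rw [hJ1] at k0
      have hz : (a.coeff s * algebraMap C K μ + c) * h (μ, J) = 0 := by linear_combination k0
      rcases mul_eq_zero.mp hz with h' | h'
      · exact h'
      · exact absurd h' hJ
    have hJ0 : J = 0 := by
      by_contra hJne0
      have hJpos : 1 ≤ J := by omega
      have k1 := kill (J - 1)
      rw [Nat.sub_add_cancel hJpos] at k1
      have hz : a.coeff s * (((J - 1 : ℕ) : K) + 1) * h (μ, J) = 0 := by
        linear_combination k1 - h (μ, J - 1) * hfirst
      have hJcast : (((J - 1 : ℕ) : K) + 1) ≠ 0 := by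
        have e : ((J - 1 : ℕ) : K) + 1 = ((J : ℕ) : K) := by
          push_cast [Nat.cast_sub hJpos]; ring
        rw [e]
        exact Nat.cast_ne_zero.mpr (by omega)
      rcases mul_eq_zero.mp hz with h' | h'
      · rcases mul_eq_zero.mp h' with h'' | h''
        · exact has0 h''
        · exact hJcast h''
      · exact hJ h'
    refine ⟨hfirst, ?_, ?_⟩
    · intro j hj1
      by_contra hcnt
      have := hJmax j hcnt
      omega
    · rw [← hJ0]; exact hJ
  have indν := indicial ν ⟨j₀, hj₀⟩ hminν
  -- no logarithms anywhere above ν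
  have nolog : ∀ m : ℕ, ∀ j, 1 ≤ j → h (ν + (m : C), j) = 0 := by
    intro m
    induction m using Nat.strong_induction_on with
    | _ m IH =>
      intro j hj1
      by_contra hcon
      rcases Nat.eq_zero_or_pos m with rfl | hm
      · exact hcon (by simpa using indν.2.1 j hj1)
      · obtain ⟨J, hJ, hJmax⟩ := maxJ (ν + (m : C)) ⟨j, hcon⟩
        have hJpos : 1 ≤ J := le_trans hj1 (hJmax j hcon)
        have key := key_eval h a b hode ha ν hminν hblow m J (Or.inl hJpos)
          (fun m' hm' => IH m' hm')
        rw [← hs, ← hc] at key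
        have hJ1 : h (ν + (m : C), J + 1) = 0 := by
          by_contra hcnt
          exact absurd (hJmax _ hcnt) (by omega)
        rw [hJ1, map_add, map_natCast] at key
        have hz : (a.coeff s * (m : K)) * h (ν + (m : C), J) = 0 := by
          linear_combination key - h (ν + (m : C), J) * indν.1
        rcases mul_eq_zero.mp hz with h' | h'
        · rcases mul_eq_zero.mp h' with h'' | h''
          · exact has0 h''
          · exact (Nat.cast_ne_zero.mpr (by omega) : (m : K) ≠ 0) h''
        · exact hJ h'
  -- the support description
  have support : ∀ p : C × ℕ, h p ≠ 0 → p.2 = 0 ∧ ∃ k : ℕ, p.1 = ν + (k : C) := by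
    intro p hp
    obtain ⟨μ, hex, hmin, n, hpn⟩ := exist_min p hp
    have hμν : μ = ν := by
      have e1 := (indicial μ hex hmin).1
      have e2 := indν.1
      have e3 : algebraMap C K μ = algebraMap C K ν := by
        have hmul : a.coeff s * algebraMap C K μ = a.coeff s * algebraMap C K ν := by
          linear_combination e1 - e2
        exact mul_left_cancel₀ has0 hmul
      exact hinj e3
    subst hμν
    refine ⟨?_, n, hpn⟩
    by_contra hp2
    have hp2' : 1 ≤ p.2 := by omega
    have hz : h (μ + (n : C), p.2) = 0 := nolog n p.2 hp2'
    rw [← hpn] at hz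
    exact hp (by rw [← Prod.mk.eta (p := p)]; exact hz)
  refine ⟨ν, support, indν.2.2, ?_⟩
  -- construction of the inverse via formal power series
  set u : PowerSeries K := PowerSeries.mk (fun n => h (ν + (n : C), 0)) with hu
  have hu0 : PowerSeries.constantCoeff u ≠ 0 := by
    rw [hu, PowerSeries.constantCoeff_mk]
    simpa using indν.2.2
  set g : C × ℕ → K := fun p =>
    if hp : p.2 = 0 ∧ ∃ n : ℕ, p.1 = -ν + (n : C) then PowerSeries.coeff hp.2.choose u⁻¹
    else 0 with hg
  have hgsupp : ∀ p : C × ℕ, g p ≠ 0 → p.2 = 0 := by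
    intro p hp
    by_contra hp2
    apply hp
    rw [hg]; dsimp only
    rw [dif_neg (by tauto)]
  have hgval : ∀ (x : C) (n : ℕ), x = -ν + (n : C) →
      g (x, 0) = PowerSeries.coeff n u⁻¹ := by
    intro x n hx
    have hex : ((x, (0:ℕ)).2 = 0 ∧ ∃ n' : ℕ, (x, (0:ℕ)).1 = -ν + ((n' : ℕ) : C)) := ⟨rfl, n, hx⟩
    rw [hg]; dsimp only
    rw [dif_pos hex]
    have hspec : x = -ν + ((hex.2.choose : ℕ) : C) := hex.2.choose_spec
    have hcc : ((hex.2.choose : ℕ) : C) = (n : C) := by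
      rw [hspec] at hx; linear_combination hx
    have hch : hex.2.choose = n := Nat.cast_injective hcc
    rw [hch]
  refine ⟨g, hgsupp, ?_⟩
  funext p
  simp only [gsMul, gsOne]
  by_cases hcase : p.2 = 0 ∧ ∃ N : ℕ, p.1 = (N : C)
  · obtain ⟨hp2, N, hpN⟩ := hcase
    have hsub : (Function.support fun q : C × ℕ =>
        if q.2 ≤ p.2 then h q * g (p.1 - q.1, p.2 - q.2) else 0) ⊆
        ((Finset.range (N + 1)).image (fun k : ℕ => ((ν + (k : C), (0 : ℕ)) : C × ℕ)) : Finset (C × ℕ)) := by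
      intro q hq
      simp only [Function.mem_support] at hq
      by_cases hq2 : q.2 ≤ p.2
      · rw [if_pos hq2] at hq
        have hh : h q ≠ 0 := left_ne_zero_of_mul hq
        have hg' : g (p.1 - q.1, p.2 - q.2) ≠ 0 := right_ne_zero_of_mul hq
        obtain ⟨hq20, k, hqk⟩ := support q hh
        have hgex : ((p.1 - q.1, p.2 - q.2).2 = 0 ∧
            ∃ n : ℕ, (p.1 - q.1, p.2 - q.2).1 = -ν + (n : C)) := by
          by_contra hcnt
          apply hg'
          rw [hg]; dsimp only
          rw [dif_neg hcnt]
        obtain ⟨-, n, hn⟩ := hgex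
        have hn' : p.1 - q.1 = -ν + (n : C) := hn
        rw [hpN, hqk] at hn'
        have hkn : (N : C) = ((k + n : ℕ) : C) := by push_cast; linear_combination hn'
        have hkN : N = k + n := Nat.cast_injective hkn
        simp only [Finset.coe_image, Set.mem_image, Finset.mem_coe, Finset.mem_range]
        refine ⟨k, by omega, ?_⟩
        rw [← hqk, ← hq20, Prod.mk.eta]
      · rw [if_neg hq2] at hq; exact absurd rfl hq
    rw [finsum_eq_sum_of_support_subset _ hsub]
    rw [Finset.sum_image (by
      intro x hx y hy hxy
      have hxy1 : ν + ((x : ℕ) : C) = ν + ((y : ℕ) : C) := (Prod.ext_iff.mp hxy).1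
      have hxy2 : ((x : ℕ) : C) = ((y : ℕ) : C) := by linear_combination hxy1
      exact_mod_cast hxy2)]
    have hterm : ∀ k ∈ Finset.range (N + 1),
        (if ((ν + (k : C), (0:ℕ)) : C × ℕ).2 ≤ p.2 then
            h (ν + (k : C), 0) * g (p.1 - ((ν + (k : C), (0:ℕ)) : C × ℕ).1,
              p.2 - ((ν + (k : C), (0:ℕ)) : C × ℕ).2) else 0)
          = PowerSeries.coeff k u * PowerSeries.coeff (N - k) u⁻¹ := by
      intro k hk
      have hkN : k ≤ N := by
        simpa [Nat.lt_succ_iff] using hk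
      rw [if_pos (Nat.zero_le _)]
      have e2 : p.2 - 0 = 0 := by omega
      have e1 : p.1 - (ν + (k : C)) = -ν + ((N - k : ℕ) : C) := by
        rw [hpN]; push_cast [Nat.cast_sub hkN]; ring
      simp only [e2]
      rw [hgval _ (N - k) e1]
      congr 1
      rw [hu, PowerSeries.coeff_mk]
    rw [Finset.sum_congr rfl hterm]
    have hmul : ∑ k ∈ Finset.range (N + 1),
        PowerSeries.coeff k u * PowerSeries.coeff (N - k) u⁻¹
        = PowerSeries.coeff N (u * u⁻¹) := by
      rw [PowerSeries.coeff_mul, Finset.Nat.sum_antidiagonal_eq_sum_range_succ_mk]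
    rw [hmul, PowerSeries.mul_inv_cancel u hu0, PowerSeries.coeff_one]
    by_cases hN : N = 0
    · rw [if_pos hN, if_pos (by
        subst hN
        rw [← Prod.mk.eta (p := p), hp2, hpN]
        norm_num)]
    · rw [if_neg hN, if_neg (by
        intro hp00
        apply hN
        have hp1 : p.1 = 0 := by rw [hp00]
        rw [hpN] at hp1
        exact_mod_cast hp1)]
  · have hF0 : ∀ q : C × ℕ,
        (if q.2 ≤ p.2 then h q * g (p.1 - q.1, p.2 - q.2) else 0) = 0 := by
      intro q
      by_cases hq2 : q.2 ≤ p.2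
      · rw [if_pos hq2]
        rcases eq_or_ne (h q) 0 with hq0 | hq0
        · rw [hq0, zero_mul]
        · obtain ⟨hq20, k, hqk⟩ := support q hq0
          have hgz : g (p.1 - q.1, p.2 - q.2) = 0 := by
            rw [hg]; dsimp only
            rw [dif_neg]
            rintro ⟨h1, n, h2⟩
            apply hcase
            constructor
            · omega
            · refine ⟨k + n, ?_⟩
              rw [hqk] at h2
              push_cast
              linear_combination h2
          rw [hgz, mul_zero]
      · rw [if_neg hq2]
    have hfun : (fun q : C × ℕ => if q.2 ≤ p.2 then h q * g (p.1 - q.1, p.2 - q.2) else 0)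
        = fun _ => 0 := funext hF0
    rw [hfun, finsum_zero, if_neg]
    intro hp00
    apply hcase
    rw [hp00]
    exact ⟨rfl, 0, by simp⟩
end
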